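/- arXiv:1911.03900 — 2 statements merged into one kernel-verified Lean document; each statement's English description precedes it below -/
import Mathlib

section
/- Let X be a real Banach space, T > 0, and let 0 = t₀ < t₁ < ⋯ < t_N = T be a time grid with step sizes kₙ := tₙ − tₙ₋₁ and k := max₁≤n≤N kₙ. Let u : [0,T] → X be continuously differentiable. Then Σ_{n=1}^{N} ∫_{tₙ₋₁}^{tₙ} ‖u(t) − (u(tₙ₋₁) + u(tₙ))/2‖² dt ≤ k² · ∫₀^T ‖u'(t)‖² dt. -/
open Set intervalIntegral

/-- Cauchy–Schwarz for interval integrals of a continuous function. -/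
lemma cs_interval {f : ℝ → ℝ} (hf : Continuous f) {a b : ℝ} (hab : a < b) :
    (∫ s in a..b, f s) ^ 2 ≤ (b - a) * ∫ s in a..b, f s ^ 2 := by
  set I := ∫ s in a..b, f s with hI
  set J := ∫ s in a..b, f s ^ 2 with hJ
  set c : ℝ := I / (b - a) with hc
  have hba : (0:ℝ) < b - a := sub_pos.mpr hab
  have h0 : 0 ≤ ∫ s in a..b, (f s - c) ^ 2 :=
    intervalIntegral.integral_nonneg hab.le fun x _ => sq_nonneg _
  have hexp : (∫ s in a..b, (f s - c) ^ 2) = J - 2 * c * I + c ^ 2 * (b - a) := by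
    have h1 : ∀ s, (f s - c) ^ 2 = f s ^ 2 - 2 * c * f s + c ^ 2 := fun s => by ring
    simp_rw [h1]
    rw [intervalIntegral.integral_add (f := fun s => f s ^ 2 - 2 * c * f s) (g := fun _ => c ^ 2) (((hf.pow 2).sub ((continuous_const.mul hf))).intervalIntegrable a b)
        (continuous_const.intervalIntegrable a b),
      intervalIntegral.integral_sub (f := fun s => f s ^ 2) (g := fun s => 2 * c * f s) ((hf.pow 2).intervalIntegrable a b)
        ((continuous_const.mul hf).intervalIntegrable a b),
      intervalIntegral.integral_const_mul, intervalIntegral.integral_const]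
    simp [hI, hJ]
    ring
  rw [hexp] at h0
  rw [hc] at h0
  rw [div_pow] at h0
  have h2 : 0 ≤ J - I ^ 2 / (b - a) := by
    have : 2 * (I / (b - a)) * I = 2 * I ^ 2 / (b - a) := by ring
    rw [this] at h0
    have : I ^ 2 / (b - a) ^ 2 * (b - a) = I ^ 2 / (b - a) := by
      field_simp
    have hx : 2 * I ^ 2 / (b - a) = 2 * (I ^ 2 / (b - a)) := by ring
    rw [this, hx] at h0
    linarith
  rw [sub_nonneg, div_le_iff₀ hba] at h2
  linarith [h2]

/-- `L²`-in-time first order estimate for `u - a_k i_k u` (lemma 2.10 of the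
paper with explicit constant `1`): on each subinterval the averaged nodal
interpolant is the mean of the endpoint values, and
`Σₙ ∫_{Iₙ} ‖u - (u(tₙ₋₁)+u(tₙ))/2‖² ≤ k² ∫₀ᵀ ‖u'‖²`. -/
theorem averaged_interpolation_L2_error
    {X : Type*} [NormedAddCommGroup X] [NormedSpace ℝ X]
    (T : ℝ) (hT : 0 < T) (N : ℕ) (hN : 0 < N) (t : ℕ → ℝ)
    (ht0 : t 0 = 0) (htN : t N = T) (hmono : ∀ n, n < N → t n < t (n + 1))
    (k : ℝ) (hk : ∀ n, 1 ≤ n → n ≤ N → t n - t (n - 1) ≤ k)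
    (u : ℝ → X) (hu : ContDiff ℝ 1 u) :
    ∑ n ∈ Finset.Icc 1 N,
        ∫ s in (t (n - 1))..(t n), ‖u s - (2⁻¹ : ℝ) • (u (t (n - 1)) + u (t n))‖ ^ 2
      ≤ k ^ 2 * ∫ s in (0 : ℝ)..T, ‖deriv u s‖ ^ 2 := by
  have hu' : Continuous (deriv u) := hu.continuous_deriv le_rfl
  have hud : Differentiable ℝ u := hu.differentiable one_ne_zero
  set F : ℝ → ℝ := fun s => ‖deriv u s‖ with hFdef
  have hFc : Continuous F := hu'.norm
  have hF2c : Continuous fun s => F s ^ 2 := hFc.pow 2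
  -- FTC-style norm bound, via the completion of X
  have ftcnorm : ∀ x y : ℝ, x ≤ y → ‖u y - u x‖ ≤ ∫ r in x..y, F r := by
    intro x y hxy
    set e : X →L[ℝ] UniformSpace.Completion X := UniformSpace.Completion.toComplL with he
    have hv : ∀ s : ℝ, HasDerivAt (fun r => e (u r)) (e (deriv u s)) s :=
      fun s => e.hasFDerivAt.comp_hasDerivAt s (hud s).hasDerivAt
    have hcont : Continuous fun s => e (deriv u s) := e.continuous.comp hu'
    have hftc : ∫ r in x..y, e (deriv u r) = e (u y) - e (u x) :=
      intervalIntegral.integral_eq_sub_of_hasDerivAt (fun r _ => hv r)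
        (hcont.intervalIntegrable x y)
    have hnorm : ∀ z : X, ‖e z‖ = ‖z‖ := by
      intro z
      rw [he, UniformSpace.Completion.coe_toComplL]
      exact UniformSpace.Completion.norm_coe z
    calc ‖u y - u x‖ = ‖e (u y) - e (u x)‖ := by rw [← map_sub, hnorm]
      _ = ‖∫ r in x..y, e (deriv u r)‖ := by rw [hftc]
      _ ≤ ∫ r in x..y, ‖e (deriv u r)‖ :=
          intervalIntegral.norm_integral_le_integral_norm hxy
      _ = ∫ r in x..y, F r := by
          apply intervalIntegral.integral_congr
          intro r _
          exact hnorm (deriv u r)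
  -- per-interval estimate
  have key : ∀ n ∈ Finset.Icc 1 N,
      (∫ s in (t (n - 1))..(t n), ‖u s - (2⁻¹ : ℝ) • (u (t (n - 1)) + u (t n))‖ ^ 2)
        ≤ k ^ 2 * ∫ s in (t (n - 1))..(t n), F s ^ 2 := by
    intro n hn
    obtain ⟨hn1, hnN⟩ := Finset.mem_Icc.mp hn
    set a := t (n - 1) with ha
    set b := t n with hb
    have hab : a < b := by
      have := hmono (n - 1) (by omega)
      rwa [show n - 1 + 1 = n by omega] at this
    have hbk : b - a ≤ k := hk n hn1 hnN
    set I := ∫ s in a..b, F s with hI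
    set J := ∫ s in a..b, F s ^ 2 with hJ
    have hInn : 0 ≤ I := intervalIntegral.integral_nonneg hab.le fun x _ => norm_nonneg _
    have hJnn : 0 ≤ J := intervalIntegral.integral_nonneg hab.le fun x _ => sq_nonneg _
    -- pointwise bound
    have hpt : ∀ s ∈ Icc a b,
        ‖u s - (2⁻¹ : ℝ) • (u a + u b)‖ ^ 2 ≤ (2⁻¹ * I) ^ 2 := by
      intro s hs
      have hs1 : a ≤ s := hs.1
      have hs2 : s ≤ b := hs.2
      have e1 : u s - (2⁻¹ : ℝ) • (u a + u b)
          = (2⁻¹ : ℝ) • (u s - u a) + (2⁻¹ : ℝ) • (u s - u b) := by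
        module
      have b1 : ‖u s - u a‖ ≤ ∫ r in a..s, F r := ftcnorm a s hs1
      have b2 : ‖u s - u b‖ ≤ ∫ r in s..b, F r := by
        rw [← norm_neg, neg_sub]
        exact ftcnorm s b hs2
      have hadd : (∫ r in a..s, F r) + ∫ r in s..b, F r = I :=
        intervalIntegral.integral_add_adjacent_intervals
          (hFc.intervalIntegrable a s) (hFc.intervalIntegrable s b)
      have hb : ‖u s - (2⁻¹ : ℝ) • (u a + u b)‖ ≤ 2⁻¹ * I := by
        calc ‖u s - (2⁻¹ : ℝ) • (u a + u b)‖
            ≤ ‖(2⁻¹ : ℝ) • (u s - u a)‖ + ‖(2⁻¹ : ℝ) • (u s - u b)‖ := by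
              rw [e1]; exact norm_add_le _ _
          _ = 2⁻¹ * ‖u s - u a‖ + 2⁻¹ * ‖u s - u b‖ := by
              rw [norm_smul, norm_smul]; norm_num
          _ ≤ 2⁻¹ * (∫ r in a..s, F r) + 2⁻¹ * ∫ r in s..b, F r := by
              gcongr
          _ = 2⁻¹ * I := by rw [← hadd]; ring
      exact pow_le_pow_left₀ (norm_nonneg _) hb 2
    have hint : (∫ s in a..b, ‖u s - (2⁻¹ : ℝ) • (u a + u b)‖ ^ 2)
        ≤ ∫ _ in a..b, (2⁻¹ * I) ^ 2 := by
      apply intervalIntegral.integral_mono_on hab.le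
      · exact (((hu.continuous.sub continuous_const).norm.pow 2).intervalIntegrable a b)
      · exact continuous_const.intervalIntegrable a b
      · exact hpt
    rw [intervalIntegral.integral_const, smul_eq_mul] at hint
    have hcs : I ^ 2 ≤ (b - a) * J := cs_interval hFc hab
    have hba : (0:ℝ) < b - a := sub_pos.mpr hab
    calc (∫ s in a..b, ‖u s - (2⁻¹ : ℝ) • (u a + u b)‖ ^ 2)
        ≤ (b - a) * (2⁻¹ * I) ^ 2 := hint
      _ ≤ k ^ 2 * J := by nlinarith [mul_le_mul_of_nonneg_right hbk hJnn, sq_nonneg I,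
          mul_le_mul_of_nonneg_left hcs hba.le]
  refine le_trans (Finset.sum_le_sum key) ?_
  rw [← Finset.mul_sum]
  have hsum : (∑ n ∈ Finset.Icc 1 N, ∫ s in (t (n - 1))..(t n), F s ^ 2)
      = ∫ s in (0:ℝ)..T, F s ^ 2 := by
    have h1 : Finset.Icc 1 N = Finset.Ico 1 (N + 1) := by
      ext x; simp [Nat.lt_succ_iff]
    rw [h1, Finset.sum_Ico_eq_sum_range]
    rw [show N + 1 - 1 = N from rfl]
    have h3 : ∀ i ∈ Finset.range N,
        (∫ s in (t (1 + i - 1))..(t (1 + i)), F s ^ 2)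
          = ∫ s in (t i)..(t (i + 1)), F s ^ 2 := by
      intro i _
      rw [show 1 + i - 1 = i from by omega, show 1 + i = i + 1 from by omega]
    rw [Finset.sum_congr rfl h3, intervalIntegral.sum_integral_adjacent_intervals
      (fun i _ => hF2c.intervalIntegrable _ _), ht0, htN]
  exact le_of_eq (by rw [hsum])
end

section
/- Let X be a real normed vector space, let A, B ∈ X, let v : ℝ → X be the affine function v(t) = A + t·B, and let a < b be real numbers. Then for every t ∈ [a,b], ‖v(t)‖² ≤ (6/(b − a))·∫ₐᵇ ‖v(s)‖² ds. In particular sup_{t∈[a,b]} ‖v(t)‖ ≤ √6·(b − a)^{−1/2}·(∫ₐᵇ ‖v(s)‖² ds)^{1/2}, an inverse inequality between the L^∞ and L² norms of affine X-valued functions on an interval. -/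
open Set intervalIntegral

lemma affine_key {X : Type*} [NormedAddCommGroup X] [NormedSpace ℝ X]
    (A B : X) (a b : ℝ) (hab : a < b) (hend : ‖A + a • B‖ ≤ ‖A + b • B‖) :
    (b - a) / 6 * ‖A + b • B‖ ^ 2 ≤ ∫ s in a..b, ‖A + s • B‖ ^ 2 := by
  have hba : (0:ℝ) < b - a := by linarith
  set c : ℝ := (a + b) / 2 with hc
  have hac : a ≤ c := by rw [hc]; linarith
  have hcb : c ≤ b := by rw [hc]; linarith
  have hcont : Continuous fun s : ℝ => ‖A + s • B‖ ^ 2 := by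
    have : Continuous fun s : ℝ => A + s • B :=
      continuous_const.add (continuous_id.smul continuous_const)
    exact (this.norm).pow 2
  have hint : ∀ p q : ℝ, IntervalIntegrable (fun s => ‖A + s • B‖ ^ 2)
      MeasureTheory.volume p q := fun p q => hcont.intervalIntegrable p q
  have hsplit : (∫ s in a..c, ‖A + s • B‖ ^ 2) + (∫ s in c..b, ‖A + s • B‖ ^ 2)
      = ∫ s in a..b, ‖A + s • B‖ ^ 2 :=
    integral_add_adjacent_intervals (hint a c) (hint c b)
  have h1 : 0 ≤ ∫ s in a..c, ‖A + s • B‖ ^ 2 :=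
    integral_nonneg hac (fun s _ => by positivity)
  -- pointwise bound on [c, b]
  have hpt : ∀ s ∈ Icc c b,
      (2 * (s - c) / (b - a)) ^ 2 * ‖A + b • B‖ ^ 2 ≤ ‖A + s • B‖ ^ 2 := by
    intro s hs
    set θ : ℝ := (s - a) / (b - a) with hθ
    have hs1 : c ≤ s := hs.1
    have hs2 : s ≤ b := hs.2
    have hθ2 : θ ≤ 1 := by rw [hθ, div_le_one hba]; linarith
    have hθ1 : 1 / 2 ≤ θ := by
      rw [hθ, le_div_iff₀ hba]; rw [hc] at hs1; linarith
    have hv : A + s • B = (1 - θ) • (A + a • B) + θ • (A + b • B) := by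
      have hs' : s = (1 - θ) * a + θ * b := by
        rw [hθ]; field_simp; ring
      rw [hs']
      module
    have hlow : (2 * θ - 1) * ‖A + b • B‖ ≤ ‖A + s • B‖ := by
      have h3 : ‖θ • (A + b • B)‖ ≤ ‖A + s • B‖ + ‖(1 - θ) • (A + a • B)‖ := by
        rw [hv]
        calc ‖θ • (A + b • B)‖
            = ‖((1 - θ) • (A + a • B) + θ • (A + b • B)) - (1 - θ) • (A + a • B)‖ := by
              congr 1; abel
          _ ≤ ‖(1 - θ) • (A + a • B) + θ • (A + b • B)‖ + ‖(1 - θ) • (A + a • B)‖ :=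
              norm_sub_le _ _
      rw [norm_smul, norm_smul, Real.norm_eq_abs, Real.norm_eq_abs,
        abs_of_nonneg (by linarith : (0:ℝ) ≤ θ),
        abs_of_nonneg (by linarith : (0:ℝ) ≤ 1 - θ)] at h3
      nlinarith [norm_nonneg (A + a • B), hend]
    have h2θ : 2 * θ - 1 = 2 * (s - c) / (b - a) := by
      rw [hθ, hc]; field_simp; ring
    rw [h2θ] at hlow
    have hnn : 0 ≤ 2 * (s - c) / (b - a) * ‖A + b • B‖ := by
      apply mul_nonneg
      · apply div_nonneg _ hba.le; linarith
      · exact norm_nonneg _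
    calc (2 * (s - c) / (b - a)) ^ 2 * ‖A + b • B‖ ^ 2
        = (2 * (s - c) / (b - a) * ‖A + b • B‖) ^ 2 := by ring
      _ ≤ ‖A + s • B‖ ^ 2 := by
          apply pow_le_pow_left₀ hnn hlow
  have hg : IntervalIntegrable
      (fun s => (2 * (s - c) / (b - a)) ^ 2 * ‖A + b • B‖ ^ 2)
      MeasureTheory.volume c b := by
    apply Continuous.intervalIntegrable
    continuity
  have hmono : (∫ s in c..b, (2 * (s - c) / (b - a)) ^ 2 * ‖A + b • B‖ ^ 2)
      ≤ ∫ s in c..b, ‖A + s • B‖ ^ 2 :=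
    integral_mono_on hcb hg (hint c b) hpt
  have hcomp : (∫ s in c..b, (s - c) ^ 2) = (b - c) ^ 3 / 3 := by
    have := intervalIntegral.integral_comp_sub_right (fun x : ℝ => x ^ 2) c (a := c) (b := b)
    rw [this]
    simp [integral_pow]
    norm_num
  have hval : (∫ s in c..b, (2 * (s - c) / (b - a)) ^ 2 * ‖A + b • B‖ ^ 2)
      = (b - a) / 6 * ‖A + b • B‖ ^ 2 := by
    have : (fun s : ℝ => (2 * (s - c) / (b - a)) ^ 2 * ‖A + b • B‖ ^ 2)
        = fun s : ℝ => (4 / (b - a) ^ 2 * ‖A + b • B‖ ^ 2) * (s - c) ^ 2 := by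
      funext s; field_simp; ring
    rw [this, intervalIntegral.integral_const_mul, hcomp]
    have hbc : b - c = (b - a) / 2 := by rw [hc]; ring
    rw [hbc]
    field_simp
    ring
  rw [hval] at hmono
  linarith

/-- Inverse inequality between the `L^∞` and `L²` norms of affine `X`-valued
functions on an interval: for `v(t) = A + t B` and `t ∈ [a,b]`,
`‖v(t)‖² ≤ (6/(b-a)) ∫ₐᵇ ‖v‖²`, hence
`sup_{[a,b]} ‖v‖ ≤ √6 (b-a)^{-1/2} (∫ₐᵇ ‖v‖²)^{1/2}`. -/
theorem affine_inverse_inequality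
    {X : Type*} [NormedAddCommGroup X] [NormedSpace ℝ X]
    (A B : X) (a b : ℝ) (hab : a < b) :
    (∀ t ∈ Icc a b, ‖A + t • B‖ ^ 2 ≤ (6 / (b - a)) * ∫ s in a..b, ‖A + s • B‖ ^ 2)
    ∧ (∀ t ∈ Icc a b, ‖A + t • B‖
        ≤ Real.sqrt 6 * (b - a) ^ (-(1 / 2 : ℝ))
          * Real.sqrt (∫ s in a..b, ‖A + s • B‖ ^ 2)) := by
  have hba : (0:ℝ) < b - a := by linarith
  set I : ℝ := ∫ s in a..b, ‖A + s • B‖ ^ 2 with hI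
  -- flipped integral equality
  have hflip : (∫ s in a..b, ‖(A + (a + b) • B) + s • (-B)‖ ^ 2) = I := by
    have h1 : (∫ s in a..b, ‖A + (a + b - s) • B‖ ^ 2) = I := by
      have := intervalIntegral.integral_comp_sub_left
        (a := a) (b := b) (fun s : ℝ => ‖A + s • B‖ ^ 2) (a + b)
      simpa using this
    rw [← h1]
    congr 1
    funext s
    congr 2
    module
  have hmax : (b - a) / 6 * (max ‖A + a • B‖ ‖A + b • B‖) ^ 2 ≤ I := by
    rcases le_total ‖A + a • B‖ ‖A + b • B‖ with h | h
    · rw [max_eq_right h]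
      exact affine_key A B a b hab h
    · rw [max_eq_left h]
      have hk := affine_key (A + (a + b) • B) (-B) a b hab ?_
      · rw [hflip] at hk
        have he : (A + (a + b) • B) + b • (-B) = A + a • B := by module
        rw [he] at hk
        exact hk
      · have he1 : (A + (a + b) • B) + a • (-B) = A + b • B := by module
        have he2 : (A + (a + b) • B) + b • (-B) = A + a • B := by module
        rw [he1, he2]
        exact h
  have hconv : ∀ t ∈ Icc a b, ‖A + t • B‖ ≤ max ‖A + a • B‖ ‖A + b • B‖ := by
    intro t ht
    set θ : ℝ := (t - a) / (b - a) with hθ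
    have hθ0 : 0 ≤ θ := div_nonneg (by linarith [ht.1]) hba.le
    have hθ1 : θ ≤ 1 := by rw [hθ, div_le_one hba]; linarith [ht.2]
    have hv : A + t • B = (1 - θ) • (A + a • B) + θ • (A + b • B) := by
      have ht' : t = (1 - θ) * a + θ * b := by rw [hθ]; field_simp; ring
      rw [ht']
      module
    rw [hv]
    calc ‖(1 - θ) • (A + a • B) + θ • (A + b • B)‖
        ≤ ‖(1 - θ) • (A + a • B)‖ + ‖θ • (A + b • B)‖ := norm_add_le _ _
      _ = (1 - θ) * ‖A + a • B‖ + θ * ‖A + b • B‖ := by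
          rw [norm_smul, norm_smul, Real.norm_eq_abs, Real.norm_eq_abs,
            abs_of_nonneg (by linarith), abs_of_nonneg hθ0]
      _ ≤ max ‖A + a • B‖ ‖A + b • B‖ := by
          have ha' := le_max_left ‖A + a • B‖ ‖A + b • B‖
          have hb' := le_max_right ‖A + a • B‖ ‖A + b • B‖
          nlinarith
  have hfirst : ∀ t ∈ Icc a b, ‖A + t • B‖ ^ 2 ≤ (6 / (b - a)) * I := by
    intro t ht
    have h1 := hconv t ht
    have h2 : ‖A + t • B‖ ^ 2 ≤ (max ‖A + a • B‖ ‖A + b • B‖) ^ 2 :=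
      pow_le_pow_left₀ (norm_nonneg _) h1 2
    have h3 : (max ‖A + a • B‖ ‖A + b • B‖) ^ 2 ≤ 6 / (b - a) * I := by
      rw [div_mul_eq_mul_div, le_div_iff₀ hba]
      nlinarith [hmax]
    linarith
  refine ⟨hfirst, ?_⟩
  intro t ht
  have hInn : 0 ≤ I := integral_nonneg hab.le (fun s _ => by positivity)
  have h2 := hfirst t ht
  calc ‖A + t • B‖ = Real.sqrt (‖A + t • B‖ ^ 2) := by
        rw [Real.sqrt_sq (norm_nonneg _)]
    _ ≤ Real.sqrt (6 / (b - a) * I) := Real.sqrt_le_sqrt h2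
    _ = Real.sqrt 6 * (b - a) ^ (-(1 / 2 : ℝ)) * Real.sqrt I := by
        rw [show 6 / (b - a) * I = 6 * ((b - a)⁻¹ * I) by ring,
          Real.sqrt_mul (by norm_num), Real.sqrt_mul (by positivity),
          Real.sqrt_inv, Real.rpow_neg hba.le, ← Real.sqrt_eq_rpow, mul_assoc]
end
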